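/- The measure λ on strict total orders of ℕ (with uniform finite restrictions) is invariant under the map induced by every bijection r : ℕ → ℕ, where the induced order is k ⊲̂ k′ iff r(k) ⊲ r(k′). Moreover λ is the unique probability measure on strict total orders of ℕ with this invariance property. -/

import Mathlib

open MeasureTheory
open scoped ENNReal

/-- `R` restricted to the labels `{1, …, n}` is a strict total order. -/
def IsSTOupto (n : ℕ) (R : ℕ+ → ℕ+ → Bool) : Prop :=
  (∀ a : ℕ+, (a : ℕ) ≤ n → R a a = false) ∧
  (∀ a b c : ℕ+, (a : ℕ) ≤ n → (b : ℕ) ≤ n → (c : ℕ) ≤ n →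
    R a b = true → R b c = true → R a c = true) ∧
  (∀ a b : ℕ+, (a : ℕ) ≤ n → (b : ℕ) ≤ n → a ≠ b → R a b = !R b a)

/-- `R` is a strict total order on all of `ℕ`. -/
def IsSTO (R : ℕ+ → ℕ+ → Bool) : Prop :=
  (∀ a, R a a = false) ∧
  (∀ a b c, R a b = true → R b c = true → R a c = true) ∧
  (∀ a b, a ≠ b → R a b = !R b a)

/-- The cylinder event that the restriction of the order to `{1, …, n}` equals `ρ`. -/
def cylinder (n : ℕ) (ρ : ℕ+ → ℕ+ → Bool) : Set (ℕ+ → ℕ+ → Bool) :=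
  {R | ∀ m m' : ℕ+, (m : ℕ) ≤ n → (m' : ℕ) ≤ n → R m m' = ρ m m'}

/-- The relabelling map on orders induced by a bijection `r` of the labels:
`k ⊲̂ k'` iff `r k ⊲ r k'`. -/
def relabel (r : ℕ+ ≃ ℕ+) (R : ℕ+ → ℕ+ → Bool) : ℕ+ → ℕ+ → Bool :=
  fun k k' => R (r k) (r k')


namespace LamAux

def label {n : ℕ} (i : Fin n) : ℕ+ := ⟨(i : ℕ) + 1, Nat.succ_pos _⟩

def idx (n : ℕ) (a : ℕ+) (h : (a : ℕ) ≤ n) : Fin n :=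
  ⟨(a : ℕ) - 1, by have := a.pos; omega⟩

lemma label_le {n : ℕ} (i : Fin n) : ((label i : ℕ+) : ℕ) ≤ n := by
  have := i.isLt; simp [label]

lemma label_idx (n : ℕ) (a : ℕ+) (h : (a : ℕ) ≤ n) : label (idx n a h) = a := by
  have := a.pos
  apply PNat.coe_injective
  simp [label, idx]; omega

lemma idx_label {n : ℕ} (i : Fin n) : idx n (label i) (label_le i) = i := by
  apply Fin.ext; simp [label, idx]

lemma label_injective {n : ℕ} : Function.Injective (label (n := n)) := by
  intro i j h
  have : idx n (label i) (label_le i) = idx n (label j) (label_le j) := by congr 1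
  rwa [idx_label, idx_label] at this

lemma forall_le_iff {n : ℕ} (p : ℕ+ → Prop) :
    (∀ a : ℕ+, (a : ℕ) ≤ n → p a) ↔ ∀ i : Fin n, p (label i) := by
  constructor
  · intro h i; exact h _ (label_le i)
  · intro h a ha; have := h (idx n a ha); rwa [label_idx] at this

def pat (n : ℕ) (σ : Equiv.Perm (Fin n)) : ℕ+ → ℕ+ → Bool := fun a b =>
  if h : (a : ℕ) ≤ n ∧ (b : ℕ) ≤ n then decide (σ (idx n a h.1) < σ (idx n b h.2)) else false

lemma pat_apply {n : ℕ} (σ : Equiv.Perm (Fin n)) {a b : ℕ+} (ha : (a : ℕ) ≤ n)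
    (hb : (b : ℕ) ≤ n) : pat n σ a b = decide (σ (idx n a ha) < σ (idx n b hb)) := by
  simp only [pat, dif_pos (And.intro ha hb)]

lemma pat_label {n : ℕ} (σ : Equiv.Perm (Fin n)) (i j : Fin n) :
    pat n σ (label i) (label j) = decide (σ i < σ j) := by
  rw [pat_apply σ (label_le i) (label_le j), idx_label, idx_label]

lemma isSTOupto_pat (n : ℕ) (σ : Equiv.Perm (Fin n)) : IsSTOupto n (pat n σ) := by
  refine ⟨fun a ha => ?_, fun a b c ha hb hc hab hbc => ?_, fun a b ha hb hab => ?_⟩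
  · rw [pat_apply σ ha ha]; simp
  · rw [pat_apply σ ha hb] at hab
    rw [pat_apply σ hb hc] at hbc
    rw [pat_apply σ ha hc]
    simp only [decide_eq_true_eq] at *
    exact hab.trans hbc
  · rw [pat_apply σ ha hb, pat_apply σ hb ha]
    have hne : σ (idx n a ha) ≠ σ (idx n b hb) := by
      intro h
      apply hab
      have := σ.injective h
      have := congrArg label this
      rwa [label_idx, label_idx] at this
    rcases lt_trichotomy (σ (idx n a ha)) (σ (idx n b hb)) with h | h | h
    · simp [h, le_of_lt h, not_lt.mpr (le_of_lt h)]
    · exact absurd h hne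
    · simp [h, not_lt.mpr (le_of_lt h)]

lemma pat_square_inj {n : ℕ} {σ σ' : Equiv.Perm (Fin n)}
    (h : ∀ i j : Fin n, σ i < σ j ↔ σ' i < σ' j) : σ = σ' := by
  have hsm : StrictMono (fun x => σ' (σ.symm x)) := by
    intro x y hxy
    have := (h (σ.symm x) (σ.symm y)).mp (by simpa using hxy)
    simpa using this
  have hid : (fun x => σ' (σ.symm x)) = (id : Fin n → Fin n) := by
    have h2 : Set.range (fun x => σ' (σ.symm x)) = Set.range (id : Fin n → Fin n) := by
      rw [Set.range_id, Set.range_eq_univ]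
      exact σ'.surjective.comp σ.symm.surjective
    haveI hwf : WellFoundedLT (Fin n) := inferInstance
    exact (@StrictMono.range_inj (Fin n) (Fin n) _ _ hwf _ _ hsm strictMono_id).mp h2
  apply Equiv.ext
  intro i
  have h3 := congrFun hid (σ i)
  simp only [Equiv.symm_apply_apply, id_eq] at h3
  exact h3.symm

/-- every STO-up-to-n pattern agrees on the square with `pat n σ` for some `σ`. -/
lemma exists_pat {n : ℕ} {ρ : ℕ+ → ℕ+ → Bool} (h : IsSTOupto n ρ) :
    ∃ σ : Equiv.Perm (Fin n), ∀ a b : ℕ+, (ha : (a : ℕ) ≤ n) → (hb : (b : ℕ) ≤ n) →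
      ρ a b = pat n σ a b := by
  classical
  obtain ⟨hirr, htrans, htri⟩ := h
  set S : Fin n → Finset (Fin n) :=
    fun i => Finset.univ.filter (fun j => ρ (label j) (label i) = true) with hS
  have hself : ∀ i, i ∉ S i := by
    intro i hi
    rw [hS] at hi
    simp only [Finset.mem_filter] at hi
    have := hirr (label i) (label_le i)
    rw [this] at hi; simp at hi
  have hcard : ∀ i, (S i).card < n := by
    intro i
    have : S i ⊂ Finset.univ := by
      refine Finset.ssubset_univ_iff.mpr ?_
      intro h
      exact hself i (h ▸ Finset.mem_univ i)
    simpa using Finset.card_lt_card this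
  set v : Fin n → Fin n := fun i => ⟨(S i).card, hcard i⟩ with hv
  have key : ∀ i j : Fin n, ρ (label i) (label j) = true → v i < v j := by
    intro i j hij
    have hsub : S i ⊂ S j := by
      constructor
      · intro k hk
        rw [hS] at *
        simp only [Finset.mem_filter] at *
        exact ⟨Finset.mem_univ _,
          htrans _ _ _ (label_le k) (label_le i) (label_le j) hk.2 hij⟩
      · intro hsub'
        apply hself i
        apply hsub'
        rw [hS]; simp only [Finset.mem_filter]
        exact ⟨Finset.mem_univ _, hij⟩
    exact Finset.card_lt_card hsub
  have htot : ∀ i j : Fin n, i ≠ j →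
      ρ (label i) (label j) = true ∨ ρ (label j) (label i) = true := by
    intro i j hij
    have hne : label i ≠ label j := fun h => hij (label_injective h)
    have := htri (label i) (label j) (label_le i) (label_le j) hne
    cases hji : ρ (label j) (label i) with
    | false => left; rw [this, hji]; rfl
    | true => right; rfl
  have hinj : Function.Injective v := by
    intro i j hij
    by_contra hne
    rcases htot i j hne with h | h
    · exact absurd hij (ne_of_lt (key _ _ h))
    · exact absurd hij.symm (ne_of_lt (key _ _ h))
  have hbij : Function.Bijective v := (Finite.injective_iff_bijective).mp hinj
  refine ⟨Equiv.ofBijective v hbij, fun a b ha hb => ?_⟩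
  rw [pat_apply _ ha hb]
  have hiff : ρ a b = true ↔ v (idx n a ha) < v (idx n b hb) := by
    constructor
    · intro hab
      apply key
      rwa [label_idx, label_idx]
    · intro hlt
      have hne : idx n a ha ≠ idx n b hb := by
        intro h; rw [h] at hlt; exact lt_irrefl _ hlt
      rcases htot _ _ hne with h | h
      · rwa [label_idx, label_idx] at h
      · exfalso
        exact absurd (key _ _ h) (not_lt.mpr (le_of_lt hlt))
  show ρ a b = decide ((Equiv.ofBijective v hbij) (idx n a ha) < (Equiv.ofBijective v hbij) (idx n b hb))
  cases hab : ρ a b with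
  | true => simp only [Equiv.ofBijective_apply]; rw [eq_comm, decide_eq_true_eq]; exact hiff.mp hab
  | false =>
    simp only [Equiv.ofBijective_apply]
    rw [eq_comm, decide_eq_false_iff_not]
    intro hlt
    rw [hiff.mpr hlt] at hab
    exact Bool.true_eq_false.mp hab

end LamAux

namespace LamAux

open Equiv

lemma mem_cylinder {n : ℕ} {ρ R : ℕ+ → ℕ+ → Bool} :
    R ∈ _root_.cylinder n ρ ↔ ∀ m m' : ℕ+, (m : ℕ) ≤ n → (m' : ℕ) ≤ n → R m m' = ρ m m' := Iff.rfl

lemma mem_cylinder_iff_label {n : ℕ} {ρ R : ℕ+ → ℕ+ → Bool} :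
    R ∈ _root_.cylinder n ρ ↔ ∀ i j : Fin n, R (label i) (label j) = ρ (label i) (label j) := by
  constructor
  · intro h i j; exact h _ _ (label_le i) (label_le j)
  · intro h a b ha hb
    have := h (idx n a ha) (idx n b hb)
    rwa [label_idx, label_idx] at this

lemma cylinder_congr {n : ℕ} {ρ ρ' : ℕ+ → ℕ+ → Bool}
    (h : ∀ a b : ℕ+, (a : ℕ) ≤ n → (b : ℕ) ≤ n → ρ a b = ρ' a b) :
    _root_.cylinder n ρ = _root_.cylinder n ρ' := by
  ext R
  constructor <;> intro hR a b ha hb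
  · rw [hR a b ha hb, h a b ha hb]
  · rw [hR a b ha hb, ← h a b ha hb]

lemma measurable_eval (a b : ℕ+) : Measurable (fun R : ℕ+ → ℕ+ → Bool => R a b) :=
  (measurable_pi_apply b).comp (measurable_pi_apply a)

lemma measurable_cylinder (n : ℕ) (ρ : ℕ+ → ℕ+ → Bool) : MeasurableSet (_root_.cylinder n ρ) := by
  have : _root_.cylinder n ρ = ⋂ (a : ℕ+) (b : ℕ+) (_ : (a : ℕ) ≤ n) (_ : (b : ℕ) ≤ n),
      {R : ℕ+ → ℕ+ → Bool | R a b = ρ a b} := by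
    ext R
    simp only [mem_cylinder, Set.mem_iInter, Set.mem_setOf_eq]
  rw [this]
  refine MeasurableSet.iInter fun a => MeasurableSet.iInter fun b =>
    MeasurableSet.iInter fun _ => MeasurableSet.iInter fun _ => ?_
  exact measurable_eval a b (measurableSet_singleton (ρ a b))

lemma measurable_relabel (r : ℕ+ ≃ ℕ+) : Measurable (relabel r) := by
  rw [measurable_pi_iff]; intro a
  rw [measurable_pi_iff]; intro b
  exact measurable_eval (r a) (r b)

/-- The collection of _root_.cylinder sets. -/
def C : Set (Set (ℕ+ → ℕ+ → Bool)) := {s | ∃ n ρ, s = _root_.cylinder n ρ}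

lemma isPiSystem_C : IsPiSystem C := by
  have key : ∀ (n m : ℕ) (ρ ρ' : ℕ+ → ℕ+ → Bool) (R : ℕ+ → ℕ+ → Bool), n ≤ m →
      R ∈ _root_.cylinder n ρ → R ∈ _root_.cylinder m ρ' →
      _root_.cylinder n ρ ∩ _root_.cylinder m ρ' = _root_.cylinder m R := by
    intro n m ρ ρ' R h hR1 hR2
    ext x
    constructor
    · rintro ⟨hx1, hx2⟩ a b ha hb
      rw [hx2 a b ha hb, hR2 a b ha hb]
    · intro hx
      constructor
      · intro a b ha hb
        rw [hx a b (ha.trans h) (hb.trans h), hR1 a b ha hb]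
      · intro a b ha hb
        rw [hx a b ha hb, hR2 a b ha hb]
  rintro s ⟨n, ρ, rfl⟩ t ⟨m, ρ', rfl⟩ hne
  obtain ⟨R, hR1, hR2⟩ := hne
  rcases le_total n m with h | h
  · rw [key n m ρ ρ' R h hR1 hR2]
    exact ⟨m, R, rfl⟩
  · rw [Set.inter_comm, key m n ρ' ρ R h hR2 hR1]
    exact ⟨n, R, rfl⟩

/-- a pattern from a boolean matrix -/
def toPat (n : ℕ) (g : Fin n → Fin n → Bool) : ℕ+ → ℕ+ → Bool := fun x y =>
  if h : (x : ℕ) ≤ n ∧ (y : ℕ) ≤ n then g (idx n x h.1) (idx n y h.2) else false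

lemma eval_measurable_genC (a b : ℕ+) (v : Bool) :
    MeasurableSet[MeasurableSpace.generateFrom C]
      ((fun R : ℕ+ → ℕ+ → Bool => R a b) ⁻¹' {v}) := by
  set n : ℕ := max (a : ℕ) (b : ℕ) with hn
  have ha : (a : ℕ) ≤ n := le_max_left _ _
  have hb : (b : ℕ) ≤ n := le_max_right _ _
  have hset : ((fun R : ℕ+ → ℕ+ → Bool => R a b) ⁻¹' {v}) =
      ⋃ (g : Fin n → Fin n → Bool) (_ : g (idx n a ha) (idx n b hb) = v),
        _root_.cylinder n (toPat n g) := by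
    ext R
    simp only [Set.mem_preimage, Set.mem_singleton_iff, Set.mem_iUnion]
    constructor
    · intro hv
      refine ⟨fun i j => R (label i) (label j), ?_, ?_⟩
      · show R (label (idx n a ha)) (label (idx n b hb)) = v
        rw [label_idx, label_idx]; exact hv
      · intro x y hx hy
        show R x y = toPat n _ x y
        rw [toPat, dif_pos (And.intro hx hy), label_idx, label_idx]
    · rintro ⟨g, hg, hR⟩
      have := hR a b ha hb
      rw [toPat, dif_pos (And.intro ha hb), hg] at this
      exact this
  rw [hset]
  exact MeasurableSet.iUnion fun g => MeasurableSet.iUnion fun _ =>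
    MeasurableSpace.measurableSet_generateFrom ⟨n, toPat n g, rfl⟩

lemma generateFrom_C :
    (inferInstance : MeasurableSpace (ℕ+ → ℕ+ → Bool)) = MeasurableSpace.generateFrom C := by
  apply le_antisymm
  · show (MeasurableSpace.pi : MeasurableSpace (ℕ+ → ℕ+ → Bool)) ≤
      MeasurableSpace.generateFrom C
    simp_rw [MeasurableSpace.pi, MeasurableSpace.comap_iSup, MeasurableSpace.comap_comp,
      Function.comp_def, iSup_le_iff]
    intro a b
    exact measurable_iff_comap_le.mp
      (@measurable_to_countable' Bool (ℕ+ → ℕ+ → Bool) _ _ (MeasurableSpace.generateFrom C)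
        (fun R => R a b) (fun v => eval_measurable_genC a b v))
  · apply MeasurableSpace.generateFrom_le
    rintro s ⟨n, ρ, rfl⟩
    exact measurable_cylinder n ρ

lemma pat_cyl_disjoint {n : ℕ} {σ σ' : Equiv.Perm (Fin n)} (h : σ ≠ σ') :
    Disjoint (_root_.cylinder n (pat n σ)) (_root_.cylinder n (pat n σ')) := by
  rw [Set.disjoint_left]
  intro R h1 h2
  apply h
  apply pat_square_inj
  intro i j
  have e1 := mem_cylinder_iff_label.mp h1 i j
  have e2 := mem_cylinder_iff_label.mp h2 i j
  rw [pat_label] at e1 e2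
  exact decide_eq_decide.mp (e1.symm.trans e2)

lemma factorial_cast_ne_zero (n : ℕ) : ((n.factorial : ℝ≥0∞)) ≠ 0 :=
  Nat.cast_ne_zero.mpr n.factorial_ne_zero

lemma union_pat_one (Q : Measure (ℕ+ → ℕ+ → Bool)) [IsProbabilityMeasure Q]
    (hQ : ∀ (n : ℕ) (σ : Equiv.Perm (Fin n)),
      Q (_root_.cylinder n (pat n σ)) = ((n.factorial : ℝ≥0∞))⁻¹) (n : ℕ) :
    Q (⋃ σ : Equiv.Perm (Fin n), _root_.cylinder n (pat n σ)) = 1 := by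
  rw [measure_iUnion (fun σ σ' h => pat_cyl_disjoint h) (fun σ => measurable_cylinder n _)]
  rw [tsum_fintype]
  rw [Finset.sum_congr rfl (fun σ _ => hQ n σ), Finset.sum_const, Finset.card_univ,
    Fintype.card_perm, Fintype.card_fin, nsmul_eq_mul]
  exact ENNReal.mul_inv_cancel (factorial_cast_ne_zero n) (ENNReal.natCast_ne_top _)

lemma compl_union_pat (Q : Measure (ℕ+ → ℕ+ → Bool)) [IsProbabilityMeasure Q]
    (hQ : ∀ (n : ℕ) (σ : Equiv.Perm (Fin n)),
      Q (_root_.cylinder n (pat n σ)) = ((n.factorial : ℝ≥0∞))⁻¹) (n : ℕ) :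
    Q ((⋃ σ : Equiv.Perm (Fin n), _root_.cylinder n (pat n σ))ᶜ) = 0 := by
  rw [measure_compl (MeasurableSet.iUnion fun σ => measurable_cylinder n _) (measure_ne_top _ _),
    union_pat_one Q hQ n, measure_univ, tsub_self]

lemma null_of_no_pat (Q : Measure (ℕ+ → ℕ+ → Bool)) [IsProbabilityMeasure Q]
    (hQ : ∀ (n : ℕ) (σ : Equiv.Perm (Fin n)),
      Q (_root_.cylinder n (pat n σ)) = ((n.factorial : ℝ≥0∞))⁻¹)
    (n : ℕ) (ρ : ℕ+ → ℕ+ → Bool)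
    (hex : ¬ ∃ σ : Equiv.Perm (Fin n), ∀ a b : ℕ+, (a : ℕ) ≤ n → (b : ℕ) ≤ n →
      ρ a b = pat n σ a b) :
    Q (_root_.cylinder n ρ) = 0 := by
  have hsub : _root_.cylinder n ρ ⊆ (⋃ σ : Equiv.Perm (Fin n), _root_.cylinder n (pat n σ))ᶜ := by
    intro R hR
    simp only [Set.mem_compl_iff, Set.mem_iUnion, not_exists]
    intro σ hRσ
    apply hex
    refine ⟨σ, fun a b ha hb => ?_⟩
    rw [← hR a b ha hb, hRσ a b ha hb]
  exact le_antisymm ((measure_mono hsub).trans (compl_union_pat Q hQ n).le) zero_le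

/-- two probability measures giving every pattern-_root_.cylinder uniform mass are equal. -/
lemma measures_eq (Q1 Q2 : Measure (ℕ+ → ℕ+ → Bool)) [IsProbabilityMeasure Q1]
    [IsProbabilityMeasure Q2]
    (h1 : ∀ (n : ℕ) (σ : Equiv.Perm (Fin n)),
      Q1 (_root_.cylinder n (pat n σ)) = ((n.factorial : ℝ≥0∞))⁻¹)
    (h2 : ∀ (n : ℕ) (σ : Equiv.Perm (Fin n)),
      Q2 (_root_.cylinder n (pat n σ)) = ((n.factorial : ℝ≥0∞))⁻¹) :
    Q1 = Q2 := by
  refine ext_of_generate_finite C generateFrom_C isPiSystem_C ?_ (by simp)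
  rintro s ⟨n, ρ, rfl⟩
  by_cases hex : ∃ σ : Equiv.Perm (Fin n), ∀ a b : ℕ+, (a : ℕ) ≤ n → (b : ℕ) ≤ n →
      ρ a b = pat n σ a b
  · obtain ⟨σ, hσ⟩ := hex
    rw [cylinder_congr hσ, h1, h2]
  · rw [null_of_no_pat Q1 h1 n ρ hex, null_of_no_pat Q2 h2 n ρ hex]

end LamAux

namespace LamAux

lemma strictMono_comp_unique {n m : ℕ} {g : Fin n → Fin m} (hg : Function.Injective g)
    {π π' : Equiv.Perm (Fin n)} (h : StrictMono (g ∘ π)) (h' : StrictMono (g ∘ π')) :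
    π = π' := by
  haveI hwf : WellFoundedLT (Fin n) := inferInstance
  have hr : Set.range (g ∘ π) = Set.range (g ∘ π') := by
    rw [Set.range_comp, Set.range_comp, Set.range_eq_univ.mpr π.surjective,
      Set.range_eq_univ.mpr π'.surjective]
  have heq := (@StrictMono.range_inj _ _ _ _ hwf _ _ h h').mp hr
  apply Equiv.ext; intro i
  exact hg (congrFun heq i)

lemma count_strictMono (n m : ℕ) (b : Fin n ↪ Fin m) :
    Nat.card {τ : Equiv.Perm (Fin m) // StrictMono fun i => τ (b i)} * n.factorial
      = m.factorial := by
  classical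
  set A : Equiv.Perm (Fin n) → Finset (Equiv.Perm (Fin m)) :=
    fun π => Finset.univ.filter (fun τ => StrictMono fun i => τ (b (π i))) with hA
  set N : ℕ := Nat.card {τ : Equiv.Perm (Fin m) // StrictMono fun i => τ (b i)} with hN
  have hNcard : N = (Finset.univ.filter
      (fun τ : Equiv.Perm (Fin m) => StrictMono fun i => τ (b i))).card := by
    rw [hN, Nat.card_eq_fintype_card, Fintype.card_subtype]
  -- each class has the same cardinality N
  have hcard : ∀ π : Equiv.Perm (Fin n), (A π).card = N := by
    intro π
    rw [hNcard, hA]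
    set c : Equiv.Perm (Fin m) := π.viaEmbedding b with hc
    have hcb : ∀ i, c (b i) = b (π i) := fun i => Equiv.Perm.viaEmbedding_apply π b i
    apply Finset.card_bij' (fun τ _ => τ * c) (fun τ' _ => τ' * c⁻¹)
    · intro τ hτ
      simp only [Finset.mem_filter, Finset.mem_univ, true_and] at hτ ⊢
      have : (fun i => (τ * c) (b i)) = fun i => τ (b (π i)) := by
        funext i; simp [Equiv.Perm.mul_apply, hcb i]
      rw [this]; exact hτ
    · intro τ' hτ'
      simp only [Finset.mem_filter, Finset.mem_univ, true_and] at hτ' ⊢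
      have : (fun i => (τ' * c⁻¹) (b (π i))) = fun i => τ' (b i) := by
        funext i
        simp [Equiv.Perm.mul_apply, ← hcb i]
      rw [this]; exact hτ'
    · intro τ _; simp [mul_assoc]
    · intro τ' _; simp [mul_assoc]
  -- the classes cover everything
  have hcover : Finset.univ.biUnion A = Finset.univ := by
    apply Finset.Subset.antisymm (Finset.subset_univ _)
    intro τ _
    rw [Finset.mem_biUnion]
    refine ⟨Tuple.sort (fun i => τ (b i)), Finset.mem_univ _, ?_⟩
    rw [hA]
    simp only [Finset.mem_filter, Finset.mem_univ, true_and]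
    have hginj : Function.Injective (fun i => τ (b i)) :=
      fun i j hij => b.injective (τ.injective hij)
    exact (Tuple.monotone_sort (fun i => τ (b i))).strictMono_of_injective
      (hginj.comp (Tuple.sort _).injective)
  -- the classes are disjoint
  have hdisj : ∀ π ∈ Finset.univ, ∀ π' ∈ (Finset.univ : Finset (Equiv.Perm (Fin n))),
      π ≠ π' → Disjoint (A π) (A π') := by
    intro π _ π' _ hne
    rw [Finset.disjoint_left]
    intro τ hτ hτ'
    rw [hA] at hτ hτ'
    simp only [Finset.mem_filter, Finset.mem_univ, true_and] at hτ hτ'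
    have hginj : Function.Injective (fun i => τ (b i)) :=
      fun i j hij => b.injective (τ.injective hij)
    exact hne (strictMono_comp_unique hginj hτ hτ')
  have := Finset.card_biUnion hdisj
  rw [hcover] at this
  have hm : m.factorial = ∑ _π : Equiv.Perm (Fin n), N := by
    have h1 : (Finset.univ : Finset (Equiv.Perm (Fin m))).card = m.factorial := by
      rw [Finset.card_univ, Fintype.card_perm, Fintype.card_fin]
    rw [← h1, this]
    exact Finset.sum_congr rfl (fun π _ => hcard π)
  rw [hm, Finset.sum_const, Finset.card_univ, Fintype.card_perm, Fintype.card_fin, smul_eq_mul,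
    mul_comm]

end LamAux

namespace LamAux

def emb (n : ℕ) : Fin n ↪ ℕ+ := ⟨label, label_injective⟩

lemma preimage_viaEmb {n : ℕ} (δ σ : Equiv.Perm (Fin n)) :
    (relabel (δ.viaEmbedding (emb n))) ⁻¹' _root_.cylinder n (pat n σ)
      = _root_.cylinder n (pat n (σ * δ⁻¹)) := by
  have hr : ∀ k : Fin n, (δ.viaEmbedding (emb n)) (label k) = label (δ k) :=
    fun k => δ.viaEmbedding_apply (emb n) k
  ext R
  rw [Set.mem_preimage, mem_cylinder_iff_label, mem_cylinder_iff_label]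
  constructor
  · intro h i j
    have h2 := h (δ.symm i) (δ.symm j)
    rw [pat_label] at h2
    rw [pat_label]
    have h3 : relabel (δ.viaEmbedding (emb n)) R (label (δ.symm i)) (label (δ.symm j))
        = R (label i) (label j) := by
      show R ((δ.viaEmbedding (emb n)) (label (δ.symm i)))
          ((δ.viaEmbedding (emb n)) (label (δ.symm j))) = _
      rw [hr, hr, Equiv.apply_symm_apply, Equiv.apply_symm_apply]
    rw [← h3, h2]
    simp [Equiv.Perm.mul_apply, Equiv.Perm.inv_def]
    exact decide_eq_decide.mpr Iff.rfl
  · intro h i j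
    rw [pat_label]
    show R ((δ.viaEmbedding (emb n)) (label i)) ((δ.viaEmbedding (emb n)) (label j)) = _
    rw [hr, hr]
    have h2 := h (δ i) (δ j)
    rw [pat_label] at h2
    rw [h2]
    simp [Equiv.Perm.mul_apply, Equiv.Perm.inv_def]

lemma map_invariant_pat (P : Measure (ℕ+ → ℕ+ → Bool)) [IsProbabilityMeasure P]
    (hSTO : P {R | IsSTO R} = 1)
    (hinv : ∀ r : ℕ+ ≃ ℕ+, P.map (relabel r) = P) :
    ∀ (n : ℕ) (σ : Equiv.Perm (Fin n)),
      P (_root_.cylinder n (pat n σ)) = ((n.factorial : ℝ≥0∞))⁻¹ := by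
  intro n σ
  have hequal : ∀ σ' : Equiv.Perm (Fin n),
      P (_root_.cylinder n (pat n σ')) = P (_root_.cylinder n (pat n σ)) := by
    intro σ'
    set δ : Equiv.Perm (Fin n) := σ'⁻¹ * σ with hδdef
    have hδ : σ * δ⁻¹ = σ' := by
      rw [hδdef, mul_inv_rev, inv_inv, ← mul_assoc, mul_inv_cancel, one_mul]
    set r : ℕ+ ≃ ℕ+ := δ.viaEmbedding (emb n) with hrdef
    calc P (_root_.cylinder n (pat n σ'))
        = P (_root_.cylinder n (pat n (σ * δ⁻¹))) := by rw [hδ]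
      _ = P ((relabel r) ⁻¹' _root_.cylinder n (pat n σ)) := by rw [hrdef, preimage_viaEmb]
      _ = P.map (relabel r) (_root_.cylinder n (pat n σ)) :=
          (Measure.map_apply (measurable_relabel r) (measurable_cylinder n _)).symm
      _ = P (_root_.cylinder n (pat n σ)) := by rw [hinv r]
  have hcover : {R | IsSTO R} ⊆ ⋃ σ' : Equiv.Perm (Fin n), _root_.cylinder n (pat n σ') := by
    intro R hR
    have hupto : IsSTOupto n R :=
      ⟨fun a _ => hR.1 a, fun a b c _ _ _ => hR.2.1 a b c, fun a b _ _ => hR.2.2 a b⟩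
    obtain ⟨σ', hσ'⟩ := exists_pat hupto
    exact Set.mem_iUnion.mpr ⟨σ', fun a b ha hb => hσ' a b ha hb⟩
  have hone : P (⋃ σ' : Equiv.Perm (Fin n), _root_.cylinder n (pat n σ')) = 1 :=
    le_antisymm prob_le_one (hSTO ▸ measure_mono hcover)
  rw [measure_iUnion (fun σ₁ σ₂ h => pat_cyl_disjoint h)
    (fun σ' => measurable_cylinder n _), tsum_fintype,
    Finset.sum_congr rfl (fun σ' _ => hequal σ'), Finset.sum_const, Finset.card_univ,
    Fintype.card_perm, Fintype.card_fin, nsmul_eq_mul] at hone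
  have hf0 := factorial_cast_ne_zero n
  have hftop : ((n.factorial : ℝ≥0∞)) ≠ ⊤ := ENNReal.natCast_ne_top _
  calc P (_root_.cylinder n (pat n σ))
      = ((n.factorial : ℝ≥0∞))⁻¹ * ((n.factorial : ℝ≥0∞) * P (_root_.cylinder n (pat n σ))) := by
        rw [← mul_assoc, ENNReal.inv_mul_cancel hf0 hftop, one_mul]
    _ = ((n.factorial : ℝ≥0∞))⁻¹ := by rw [hone, mul_one]

lemma lam_preimage_pat (lam : Measure (ℕ+ → ℕ+ → Bool)) [IsProbabilityMeasure lam]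
    (hQ : ∀ (n : ℕ) (σ : Equiv.Perm (Fin n)),
      lam (_root_.cylinder n (pat n σ)) = ((n.factorial : ℝ≥0∞))⁻¹)
    (r : ℕ+ ≃ ℕ+) (n : ℕ) (σ : Equiv.Perm (Fin n)) :
    lam ((relabel r) ⁻¹' _root_.cylinder n (pat n σ)) = ((n.factorial : ℝ≥0∞))⁻¹ := by
  classical
  set m : ℕ := Finset.univ.sup (fun i : Fin n => ((r (label i)) : ℕ)) with hm
  have hle : ∀ i : Fin n, ((r (label i)) : ℕ) ≤ m := by
    intro i
    rw [hm]
    exact Finset.le_sup (f := fun i : Fin n => ((r (label i)) : ℕ)) (Finset.mem_univ i)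
  have hbinj : Function.Injective (fun i : Fin n => idx m (r (label i)) (hle i)) := by
    intro i j hij
    have h2 := congrArg label hij
    rw [label_idx, label_idx] at h2
    exact label_injective (r.injective h2)
  set b : Fin n ↪ Fin m := ⟨fun i => idx m (r (label i)) (hle i), hbinj⟩ with hb
  have hlb : ∀ i : Fin n, label (b i) = r (label i) := fun i => label_idx m (r (label i)) (hle i)
  set E := (relabel r) ⁻¹' _root_.cylinder n (pat n σ) with hE
  have hEmeas : MeasurableSet E := (measurable_relabel r) (measurable_cylinder n _)
  have hinter : ∀ τ : Equiv.Perm (Fin m),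
      E ∩ _root_.cylinder m (pat m τ) =
        if (∀ i j : Fin n, τ (b i) < τ (b j) ↔ σ i < σ j) then _root_.cylinder m (pat m τ)
        else (∅ : Set _) := by
    intro τ
    split_ifs with hcompat
    · rw [Set.inter_eq_self_of_subset_right]
      intro R hR
      rw [hE, Set.mem_preimage, mem_cylinder_iff_label]
      intro i j
      show R (r (label i)) (r (label j)) = pat n σ (label i) (label j)
      rw [pat_label, ← hlb i, ← hlb j]
      have h2 := mem_cylinder_iff_label.mp hR (b i) (b j)
      rw [pat_label] at h2
      rw [h2]
      exact decide_eq_decide.mpr (hcompat i j)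
    · rw [Set.eq_empty_iff_forall_notMem]
      rintro R ⟨hRE, hRc⟩
      apply hcompat
      intro i j
      have h1 := mem_cylinder_iff_label.mp (Set.mem_preimage.mp hRE) i j
      rw [pat_label] at h1
      have h2 := mem_cylinder_iff_label.mp hRc (b i) (b j)
      rw [pat_label] at h2
      have h3 : relabel r R (label i) (label j) = R (label (b i)) (label (b j)) := by
        rw [hlb i, hlb j]; rfl
      rw [h3, h2] at h1
      exact decide_eq_decide.mp h1
  have hEnull : lam E = lam (⋃ τ : Equiv.Perm (Fin m), E ∩ _root_.cylinder m (pat m τ)) := by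
    rw [← Set.inter_iUnion]
    exact (measure_inter_conull (compl_union_pat lam hQ m)).symm
  have hdisj : Pairwise (Function.onFun Disjoint
      fun τ : Equiv.Perm (Fin m) => E ∩ _root_.cylinder m (pat m τ)) :=
    fun τ τ' h => ((pat_cyl_disjoint h).mono Set.inter_subset_right Set.inter_subset_right)
  rw [hEnull, measure_iUnion hdisj (fun τ => hEmeas.inter (measurable_cylinder m _)),
    tsum_fintype]
  have hval : ∀ τ : Equiv.Perm (Fin m), lam (E ∩ _root_.cylinder m (pat m τ)) =
      if (∀ i j : Fin n, τ (b i) < τ (b j) ↔ σ i < σ j) then ((m.factorial : ℝ≥0∞))⁻¹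
      else 0 := by
    intro τ
    rw [hinter τ]
    split_ifs with h
    exacts [hQ m τ, measure_empty]
  rw [Finset.sum_congr rfl (fun τ _ => hval τ), ← Finset.sum_filter, Finset.sum_const]
  set b2 : Fin n ↪ Fin m := σ.symm.toEmbedding.trans b with hb2
  have hb2app : ∀ i : Fin n, b2 i = b (σ.symm i) := fun i => rfl
  have hiff : ∀ τ : Equiv.Perm (Fin m),
      (∀ i j : Fin n, τ (b i) < τ (b j) ↔ σ i < σ j) ↔ StrictMono fun i => τ (b2 i) := by
    intro τ
    constructor
    · intro h x y hxy
      show τ (b2 x) < τ (b2 y)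
      rw [hb2app, hb2app]
      exact (h _ _).mpr (by simpa using hxy)
    · intro h i j
      have h2 := h.lt_iff_lt (a := σ i) (b := σ j)
      simp only [hb2app, Equiv.symm_apply_apply] at h2
      exact h2
  have hfilter : (Finset.univ.filter
        (fun τ : Equiv.Perm (Fin m) => ∀ i j : Fin n, τ (b i) < τ (b j) ↔ σ i < σ j))
      = Finset.univ.filter (fun τ => StrictMono fun i => τ (b2 i)) := by
    apply Finset.filter_congr
    intro τ _
    exact hiff τ
  rw [hfilter]
  have hcount := count_strictMono n m b2
  have hcardeq : (Finset.univ.filter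
        (fun τ : Equiv.Perm (Fin m) => StrictMono fun i => τ (b2 i))).card
      = Nat.card {τ : Equiv.Perm (Fin m) // StrictMono fun i => τ (b2 i)} := by
    rw [Nat.card_eq_fintype_card, Fintype.card_subtype]
  rw [hcardeq, nsmul_eq_mul]
  set N := Nat.card {τ : Equiv.Perm (Fin m) // StrictMono fun i => τ (b2 i)} with hN
  have hcast : (N : ℝ≥0∞) * (n.factorial : ℝ≥0∞) = (m.factorial : ℝ≥0∞) := by
    exact_mod_cast congrArg (Nat.cast : ℕ → ℝ≥0∞) hcount
  have hN0 : (N : ℝ≥0∞) ≠ 0 := by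
    rw [Ne, Nat.cast_eq_zero]
    intro h0
    rw [h0, zero_mul] at hcount
    exact (m.factorial_ne_zero) hcount.symm
  have hNtop : (N : ℝ≥0∞) ≠ ⊤ := ENNReal.natCast_ne_top _
  calc (N : ℝ≥0∞) * ((m.factorial : ℝ≥0∞))⁻¹
      = (N : ℝ≥0∞) * ((N : ℝ≥0∞) * (n.factorial : ℝ≥0∞))⁻¹ := by rw [hcast]
    _ = (N : ℝ≥0∞) * ((N : ℝ≥0∞)⁻¹ * ((n.factorial : ℝ≥0∞))⁻¹) := by
        rw [ENNReal.mul_inv (Or.inl hN0) (Or.inl hNtop)]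
    _ = ((N : ℝ≥0∞) * (N : ℝ≥0∞)⁻¹) * ((n.factorial : ℝ≥0∞))⁻¹ := by rw [mul_assoc]
    _ = ((n.factorial : ℝ≥0∞))⁻¹ := by
        rw [ENNReal.mul_inv_cancel hN0 hNtop, one_mul]

end LamAux

open LamAux in
/-- The measure `λ` on strict total orders of `ℕ` with uniform finite restrictions is invariant
under the map induced by every bijection `r` of the labels, and it is the unique probability
measure concentrated on strict total orders with this invariance property. -/
theorem lambda_relabelling_invariant_and_unique
    (lam : Measure (ℕ+ → ℕ+ → Bool)) (hlam : IsProbabilityMeasure lam)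
    (huniform : ∀ (n : ℕ) (ρ : ℕ+ → ℕ+ → Bool), IsSTOupto n ρ →
      lam (cylinder n ρ) = ((Nat.factorial n : ℝ≥0∞))⁻¹) :
    (∀ r : ℕ+ ≃ ℕ+, lam.map (relabel r) = lam) ∧
      ∀ P : Measure (ℕ+ → ℕ+ → Bool), IsProbabilityMeasure P →
        P {R | IsSTO R} = 1 →
        (∀ r : ℕ+ ≃ ℕ+, P.map (relabel r) = P) → P = lam := by
  haveI := hlam
  have hlampat : ∀ (n : ℕ) (σ : Equiv.Perm (Fin n)),
      lam (cylinder n (pat n σ)) = ((n.factorial : ℝ≥0∞))⁻¹ :=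
    fun n σ => huniform n (pat n σ) (isSTOupto_pat n σ)
  constructor
  · intro r
    haveI : IsProbabilityMeasure (lam.map (relabel r)) :=
      Measure.isProbabilityMeasure_map (measurable_relabel r).aemeasurable
    apply measures_eq
    · intro n σ
      rw [Measure.map_apply (measurable_relabel r) (measurable_cylinder n _)]
      exact lam_preimage_pat lam hlampat r n σ
    · exact hlampat
  · intro P hP hPSTO hPinv
    haveI := hP
    exact measures_eq P lam (map_invariant_pat P hPSTO hPinv) hlampat
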